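/- Let w be a word over an alphabet Σ, let m ≥ 1, let u be a word of length m, and let σ be a letter of Σ. Let S = {j ∈ ℕ : u ++ [σ] occurs in w at position j}, and let a ≤ b be natural numbers with b - a < m. Set T = S ∩ [a, b] (the set of elements of S lying between a and b inclusive) and suppose T has at least 3 elements. Then there exists an integer d ≥ 1 such that d divides (max T - min T), T = { min T + k·d : 0 ≤ k ≤ (max T - min T)/d } (i.e., T is an arithmetic progression with common difference d), and the factor of w consisting of positions min T through max T + m - 1 has period d. -/
import Mathlib


/-- `u` occurs in `w` at position `j` (0-indexed). -/
def Occurs {α : Type*} (u w : List α) (j : ℕ) : Prop :=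
  u <+: w.drop j

/-- `v` has period `d`: letters at distance `d` agree whenever both indices
are smaller than the length of `v`. -/
def HasPeriod {α : Type*} (v : List α) (d : ℕ) : Prop :=
  ∀ t : ℕ, t < v.length → t + d < v.length → v[t]? = v[t + d]?

private lemma hasPeriod_mul {α : Type*} {v : List α} {d : ℕ} (h : HasPeriod v d) (k : ℕ) :
    HasPeriod v (k * d) := by
  induction k with
  | zero => intro t ht htd; simp
  | succ k ih =>
    intro t ht htd
    have hs : (k + 1) * d = k * d + d := by ring
    have h1 : t + k * d < v.length := by omega
    calc v[t]? = v[t + k * d]? := ih t ht h1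
      _ = v[t + k * d + d]? := h (t + k * d) h1 (by omega)
      _ = v[t + (k + 1) * d]? := by rw [show t + k * d + d = t + (k + 1) * d by omega]

private lemma fw_aux {α : Type*} : ∀ n : ℕ, ∀ r1 r2 : ℕ, ∀ v : List α,
    r1 + r2 ≤ n → 1 ≤ r1 → r1 ≤ r2 →
    r1 + r2 ≤ v.length → HasPeriod v r1 → HasPeriod v r2 →
    HasPeriod v (Nat.gcd r1 r2) := by
  intro n
  induction n with
  | zero => intro r1 r2 v hn h1; omega
  | succ n ih =>
    intro r1 r2 v hn h1 hle hlen hp1 hp2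
    rcases eq_or_lt_of_le hle with heq | hlt
    · subst heq; rwa [Nat.gcd_self]
    · have hsub : HasPeriod v (r2 - r1) := by
        intro t ht htd
        rcases lt_or_ge (t + r2) v.length with hc | hc
        · have e1 : v[t]? = v[t + r2]? := hp2 t ht hc
          have e2 : v[t + (r2 - r1)]? = v[t + (r2 - r1) + r1]? := hp1 _ htd (by omega)
          rw [show t + (r2 - r1) + r1 = t + r2 by omega] at e2
          rw [e1, e2]
        · have e1 : v[t - r1]? = v[t - r1 + r1]? := hp1 (t - r1) (by omega) (by omega)
          have e2 : v[t - r1]? = v[t - r1 + r2]? := hp2 (t - r1) (by omega) (by omega)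
          rw [show t - r1 + r1 = t by omega] at e1
          rw [show t - r1 + r2 = t + (r2 - r1) by omega] at e2
          rw [← e1, e2]
      have hg : Nat.gcd r1 (r2 - r1) = Nat.gcd r1 r2 := by
        conv_rhs => rw [show r2 = (r2 - r1) + r1 by omega]
        rw [Nat.gcd_add_self_right]
      rcases le_or_gt r1 (r2 - r1) with ho | ho
      · have := ih r1 (r2 - r1) v (by omega) h1 ho (by omega) hp1 hsub
        rwa [hg] at this
      · have := ih (r2 - r1) r1 v (by omega) (by omega) (by omega) (by omega) hsub hp1
        rwa [Nat.gcd_comm, hg] at this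

private lemma fw {α : Type*} {r1 r2 : ℕ} {v : List α} (h1 : 1 ≤ r1) (h2 : 1 ≤ r2)
    (hlen : r1 + r2 ≤ v.length) (hp1 : HasPeriod v r1) (hp2 : HasPeriod v r2) :
    HasPeriod v (Nat.gcd r1 r2) := by
  rcases le_or_gt r1 r2 with h | h
  · exact fw_aux (r1 + r2) r1 r2 v le_rfl h1 h hlen hp1 hp2
  · rw [Nat.gcd_comm]
    exact fw_aux (r2 + r1) r2 r1 v le_rfl h2 (le_of_lt h) (by omega) hp2 hp1

theorem stmt3 {α : Type*} (w u : List α) (m : ℕ) (hm : 1 ≤ m)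
    (hu : u.length = m) (σ : α) (a b : ℕ) (hab : a ≤ b) (hba : b - a < m)
    (T : Finset ℕ)
    (hT : ∀ j : ℕ, j ∈ T ↔ (a ≤ j ∧ j ≤ b ∧ Occurs (u ++ [σ]) w j))
    (hcard : 3 ≤ T.card) :
    ∃ d : ℕ, 1 ≤ d ∧ ∃ hne : T.Nonempty,
      d ∣ (T.max' hne - T.min' hne) ∧
      (∀ j : ℕ, j ∈ T ↔ ∃ k : ℕ, k ≤ (T.max' hne - T.min' hne) / d ∧
        j = T.min' hne + k * d) ∧
      HasPeriod ((w.drop (T.min' hne)).take (T.max' hne + m - T.min' hne)) d := by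
  classical
  have hne : T.Nonempty := Finset.card_pos.mp (by omega)
  set x : List α := u ++ [σ] with hx
  have hxlen : x.length = m + 1 := by simp [hx, hu]
  set p := T.min' hne with hp
  set q := T.max' hne with hq
  have hpq : p < q := Finset.min'_lt_max'_of_card T (by omega)
  have hpT : p ∈ T := T.min'_mem hne
  have hqT : q ∈ T := T.max'_mem hne
  obtain ⟨hap, hpb, hop⟩ := (hT p).mp hpT
  obtain ⟨haq, hqb, hoq⟩ := (hT q).mp hqT
  set D := q - p with hD
  have hD1 : 1 ≤ D := by omega
  have hDm : D < m := by omega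
  -- w is long enough
  have hwlen : q + m + 1 ≤ w.length := by
    have := hoq.length_le
    simp [hxlen] at this
    omega
  -- pointwise characterization of occurrences
  have occ_pt : ∀ i : ℕ, Occurs x w i → ∀ t : ℕ, t ≤ m → w[i + t]? = x[t]? := by
    intro i hi t ht
    have hi' : x <+: w.drop i := hi
    have heq : x = (w.drop i).take (m + 1) := by
      rw [List.prefix_iff_eq_take] at hi'
      rw [hi', hxlen]
    have : x[t]? = ((w.drop i).take (m + 1))[t]? := by rw [← heq]
    rw [this, List.getElem?_take, if_pos (by omega), List.getElem?_drop]
  have occ_of_pt : ∀ i : ℕ, i + m + 1 ≤ w.length → (∀ t : ℕ, t ≤ m → w[i + t]? = x[t]?) →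
      Occurs x w i := by
    intro i hlen hpt
    have heq : x = (w.drop i).take (m + 1) := by
      apply List.ext_getElem?
      intro t
      rcases lt_or_ge t (m + 1) with htm | htm
      · rw [List.getElem?_take, if_pos htm, List.getElem?_drop, hpt t (by omega)]
      · rw [List.getElem?_eq_none (by omega), List.getElem?_eq_none (by
          simp only [List.length_take, List.length_drop]
          omega)]
    rw [Occurs, heq]
    exact List.take_prefix _ _
  -- the factor v of length D + m + 1
  set v : List α := (w.drop p).take (D + m + 1) with hv
  have hvlen : v.length = D + m + 1 := by
    simp only [hv, List.length_take, List.length_drop]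
    omega
  have hvw : ∀ s : ℕ, s < D + m + 1 → v[s]? = w[p + s]? := by
    intro s hs
    rw [hv, List.getElem?_take, if_pos hs, List.getElem?_drop]
  -- base values of v from the occurrence at p and q
  have hvp : ∀ t : ℕ, t ≤ m → v[t]? = x[t]? := by
    intro t ht
    rw [hvw t (by omega)]
    exact occ_pt p hop t ht
  have hvq : ∀ t : ℕ, t ≤ m → v[D + t]? = x[t]? := by
    intro t ht
    rw [hvw (D + t) (by omega), show p + (D + t) = q + t by omega]
    exact occ_pt q hoq t ht
  -- v has period D
  have hperD : HasPeriod v D := by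
    intro t ht htd
    rw [hvlen] at ht htd
    have htm : t ≤ m := by omega
    rw [hvp t htm, show t + D = D + t by omega, hvq t htm]
  -- occurrence at p + r iff period r, for 1 ≤ r ≤ D
  have occ_iff : ∀ r : ℕ, 1 ≤ r → r ≤ D → (Occurs x w (p + r) ↔ HasPeriod v r) := by
    intro r hr1 hrD
    constructor
    · intro ho
      have hstep : ∀ t : ℕ, t ≤ m → v[t]? = v[t + r]? := by
        intro t htm
        rw [hvp t htm, hvw (t + r) (by omega), show p + (t + r) = p + r + t by omega]
        exact (occ_pt (p + r) ho t htm).symm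
      intro t ht htd
      rw [hvlen] at ht htd
      rcases le_or_gt t m with htm | htm
      · exact hstep t htm
      · -- t > m : use period D to reduce
        have hs : t - D ≤ m := by omega
        have e1 : v[t - D]? = v[t - D + D]? := hperD (t - D) (by omega) (by omega)
        rw [show t - D + D = t by omega] at e1
        have e2 : v[t - D]? = v[t - D + r]? := hstep (t - D) hs
        have e3 : v[t - D + r]? = v[t - D + r + D]? := hperD (t - D + r) (by omega) (by omega)
        rw [show t - D + r + D = t + r by omega] at e3
        rw [← e1, e2, e3]
    · intro hper
      apply occ_of_pt (p + r) (by omega)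
      intro t ht
      have e1 : v[t]? = v[t + r]? := hper t (by omega) (by omega)
      rw [show p + r + t = p + (t + r) by omega, ← hvw (t + r) (by omega), ← e1]
      exact hvp t ht
  -- membership in T for positions p + r, r ≤ D
  have memT_iff : ∀ r : ℕ, r ≤ D → (p + r ∈ T ↔ Occurs x w (p + r)) := by
    intro r hrD
    rw [hT]
    constructor
    · rintro ⟨-, -, h⟩; exact h
    · intro h; exact ⟨by omega, by omega, h⟩
  -- the set of periods of v within [1, D]
  set Sd : Finset ℕ := (Finset.Icc 1 D).filter (fun r => HasPeriod v r) with hSd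
  have hDSd : D ∈ Sd := by
    rw [hSd, Finset.mem_filter, Finset.mem_Icc]
    exact ⟨⟨hD1, le_rfl⟩, hperD⟩
  have hSdne : Sd.Nonempty := ⟨D, hDSd⟩
  set d := Sd.min' hSdne with hd
  have hdSd : d ∈ Sd := Sd.min'_mem hSdne
  rw [hSd, Finset.mem_filter, Finset.mem_Icc] at hdSd
  obtain ⟨⟨hd1, hdD⟩, hdper⟩ := hdSd
  -- d divides every element of Sd
  have hdvd : ∀ r : ℕ, 1 ≤ r → r ≤ D → HasPeriod v r → d ∣ r := by
    intro r hr1 hrD hper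
    have hg : HasPeriod v (Nat.gcd d r) := fw hd1 hr1 (by omega) hdper hper
    have hg1 : 1 ≤ Nat.gcd d r := Nat.pos_of_ne_zero (Nat.gcd_ne_zero_left (by omega))
    have hgSd : Nat.gcd d r ∈ Sd := by
      rw [hSd, Finset.mem_filter, Finset.mem_Icc]
      refine ⟨⟨hg1, ?_⟩, hg⟩
      exact le_trans (Nat.le_of_dvd (by omega) (Nat.gcd_dvd_left d r)) hdD
    have hmin : d ≤ Nat.gcd d r := Sd.min'_le _ hgSd
    have hgle : Nat.gcd d r ≤ d := Nat.le_of_dvd (by omega) (Nat.gcd_dvd_left d r)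
    have : Nat.gcd d r = d := le_antisymm hgle hmin
    rw [← this]
    exact Nat.gcd_dvd_right d r
  have hddD : d ∣ D := hdvd D hD1 le_rfl hperD
  refine ⟨d, hd1, hne, ?_, ?_, ?_⟩
  · exact hddD
  · intro j
    constructor
    · intro hjT
      have hpj : p ≤ j := T.min'_le j hjT
      have hjq : j ≤ q := T.le_max' j hjT
      set r := j - p with hr
      have hrD : r ≤ D := by omega
      rcases Nat.eq_zero_or_pos r with hr0 | hr1
      · exact ⟨0, Nat.zero_le _, by omega⟩
      · have ho : Occurs x w (p + r) := by
          have : p + r = j := by omega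
          rw [this]
          exact ((hT j).mp hjT).2.2
        have hper : HasPeriod v r := (occ_iff r hr1 hrD).mp ho
        have hdr : d ∣ r := hdvd r hr1 hrD hper
        refine ⟨r / d, ?_, ?_⟩
        · exact Nat.div_le_div_right hrD
        · rw [Nat.div_mul_cancel hdr]; omega
    · rintro ⟨k, hk, rfl⟩
      have hkd : k * d ≤ D := by
        have : k * d ≤ (D / d) * d := Nat.mul_le_mul_right d hk
        rwa [Nat.div_mul_cancel hddD] at this
      rcases Nat.eq_zero_or_pos k with hk0 | hk1
      · subst hk0; simpa using hpT
      · have hper : HasPeriod v (k * d) := hasPeriod_mul hdper k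
        have ho : Occurs x w (p + k * d) :=
          (occ_iff (k * d) (Nat.mul_pos hk1 hd1) hkd).mpr hper
        exact (memT_iff (k * d) hkd).mpr ho
  · -- the final period statement
    intro t ht htd
    set v' : List α := (w.drop p).take (q + m - p) with hv'
    have hv'len : v'.length = D + m := by
      simp only [hv', List.length_take, List.length_drop]
      omega
    rw [hv'len] at ht htd
    have hv'w : ∀ s : ℕ, s < D + m → v'[s]? = w[p + s]? := by
      intro s hs
      rw [hv', List.getElem?_take, if_pos (by omega), List.getElem?_drop]
    rw [hv'w t (by omega), hv'w (t + d) (by omega), ← hvw t (by omega),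
      ← hvw (t + d) (by omega)]
    exact hdper t (by omega) (by omega)
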